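/- Let a, b, c, d be positive real numbers such that ε₁a + ε₂b + ε₃c + ε₄d ≠ 0 for every choice of signs εᵢ ∈ {+1, −1}, and such that Q(a,b,c,d) admits at least one configuration. Then the image {R(V) : V a configuration of Q(a,b,c,d)} is a connected subset of ℂ. -/

import Mathlib

/-- The uniformizer `R(V) = [v₁,v₃;v₂,v₄]` of a planar quadrilateral. -/
noncomputable def uniformizer (v₁ v₂ v₃ v₄ : ℂ) : ℂ :=
  ((v₂ - v₁) / (v₂ - v₃)) * ((v₄ - v₃) / (v₄ - v₁))

/-- A planar configuration of the quadrilateral linkage `Q(a,b,c,d)`. -/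
def IsConfig (a b c d : ℝ) (v₁ v₂ v₃ v₄ : ℂ) : Prop :=
  ‖v₂ - v₁‖ = a ∧ ‖v₃ - v₂‖ = b ∧
  ‖v₄ - v₃‖ = c ∧ ‖v₁ - v₄‖ = d

/-- Non-degeneracy of the linkage `Q(a,b,c,d)`:
`ε₁a + ε₂b + ε₃c + ε₄d ≠ 0` for all choices of signs `εᵢ ∈ {±1}`. -/
def NonDeg (a b c d : ℝ) : Prop :=
  ∀ ε₁ ε₂ ε₃ ε₄ : ℝ, (ε₁ = 1 ∨ ε₁ = -1) → (ε₂ = 1 ∨ ε₂ = -1) →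
    (ε₃ = 1 ∨ ε₃ = -1) → (ε₄ = 1 ∨ ε₄ = -1) →
    ε₁ * a + ε₂ * b + ε₃ * c + ε₄ * d ≠ 0


noncomputable def X2 (a b e : ℝ) : ℝ := (a^2 + e^2 - b^2) / (2*e)
noncomputable def Y2 (a b e : ℝ) : ℝ := Real.sqrt (a^2 - (X2 a b e)^2)
noncomputable def V2 (a b σ e : ℝ) : ℂ :=
  (X2 a b e : ℂ) + (σ : ℂ) * (Y2 a b e : ℂ) * Complex.I
noncomputable def FF (a b c d σ τ e : ℝ) : ℂ :=
  uniformizer 0 (V2 a b σ e) (e : ℂ) (V2 d c τ e)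

lemma quartic (a b e : ℝ) (he : e ≠ 0) :
    a^2 - (X2 a b e)^2 = ((a+b)^2 - e^2) * (e^2 - (a-b)^2) / (4*e^2) := by
  unfold X2; field_simp; ring

lemma sq_nonneg' (a b e : ℝ) (he : 0 < e) (h1 : |a-b| ≤ e) (h2 : e ≤ a+b) :
    0 ≤ a^2 - (X2 a b e)^2 := by
  rw [quartic a b e he.ne']
  have h3 : (a-b)^2 ≤ e^2 := by
    have := abs_nonneg (a-b)
    nlinarith [sq_abs (a-b)]
  have h4 : e^2 ≤ (a+b)^2 := by nlinarith
  have h5 : (0:ℝ) < 4*e^2 := by positivity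
  apply div_nonneg _ h5.le
  nlinarith

lemma Y2_sq (a b e : ℝ) (he : 0 < e) (h1 : |a-b| ≤ e) (h2 : e ≤ a+b) :
    (Y2 a b e)^2 = a^2 - (X2 a b e)^2 :=
  Real.sq_sqrt (sq_nonneg' a b e he h1 h2)

lemma Y2_pos (a b e : ℝ) (he : 0 < e) (h1 : |a-b| < e) (h2 : e < a+b) :
    0 < Y2 a b e := by
  apply Real.sqrt_pos.mpr
  rw [quartic a b e he.ne']
  have h3 : (a-b)^2 < e^2 := by
    have := abs_nonneg (a-b)
    nlinarith [sq_abs (a-b)]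
  have h4 : e^2 < (a+b)^2 := by nlinarith
  have : 0 < 4*e^2 := by positivity
  exact div_pos (mul_pos (by linarith) (by linarith)) this

lemma Y2_zero_low (a b e : ℝ) (he : 0 < e) (h1 : e = |a-b|) : Y2 a b e = 0 := by
  have : a^2 - (X2 a b e)^2 = 0 := by
    rw [quartic a b e he.ne']
    have : e^2 = (a-b)^2 := by rw [h1, sq_abs]
    rw [this]; ring
  rw [Y2, this, Real.sqrt_zero]

lemma Y2_zero_high (a b e : ℝ) (he : 0 < e) (h1 : e = a+b) : Y2 a b e = 0 := by
  have : a^2 - (X2 a b e)^2 = 0 := by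
    rw [quartic a b e he.ne', h1]; ring
  rw [Y2, this, Real.sqrt_zero]

lemma V2_re (a b σ e : ℝ) : (V2 a b σ e).re = X2 a b e := by simp [V2]
lemma V2_im (a b σ e : ℝ) : (V2 a b σ e).im = σ * Y2 a b e := by simp [V2]

lemma normSq_V2 (a b σ e : ℝ) (hσ : σ = 1 ∨ σ = -1) (he : 0 < e)
    (h1 : |a-b| ≤ e) (h2 : e ≤ a+b) :
    Complex.normSq (V2 a b σ e) = a^2 := by
  have hσ2 : σ^2 = 1 := by rcases hσ with h|h <;> rw [h] <;> ring
  rw [Complex.normSq_apply, V2_re, V2_im]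
  have := Y2_sq a b e he h1 h2
  nlinarith [this]

lemma X2_rel (a b e : ℝ) (he : 0 < e) : 2*e*(X2 a b e) = a^2 + e^2 - b^2 := by
  unfold X2; field_simp

lemma normSq_V2_sub (a b σ e : ℝ) (hσ : σ = 1 ∨ σ = -1) (he : 0 < e)
    (h1 : |a-b| ≤ e) (h2 : e ≤ a+b) :
    Complex.normSq ((e:ℂ) - V2 a b σ e) = b^2 := by
  have hσ2 : σ^2 = 1 := by rcases hσ with h|h <;> rw [h] <;> ring
  have hy := Y2_sq a b e he h1 h2
  have hx := X2_rel a b e he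
  simp only [Complex.normSq_apply, Complex.sub_re, Complex.sub_im, V2_re, V2_im,
    Complex.ofReal_re, Complex.ofReal_im]
  nlinarith [hy, hx]

lemma abs_of_normSq {z : ℂ} {r : ℝ} (hr : 0 ≤ r) (h : Complex.normSq z = r^2) :
    ‖z‖ = r := by
  rw [Complex.norm_def, h, Real.sqrt_sq hr]

lemma config_of (a b c d σ τ e : ℝ) (ha : 0 ≤ a) (hb : 0 ≤ b) (hc : 0 ≤ c) (hd : 0 ≤ d)
    (hσ : σ = 1 ∨ σ = -1) (hτ : τ = 1 ∨ τ = -1) (he : 0 < e)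
    (h1 : |a-b| ≤ e) (h2 : e ≤ a+b) (h3 : |c-d| ≤ e) (h4 : e ≤ c+d) :
    IsConfig a b c d 0 (V2 a b σ e) (e:ℂ) (V2 d c τ e) := by
  refine ⟨?_, ?_, ?_, ?_⟩
  · rw [sub_zero]; exact abs_of_normSq ha (normSq_V2 a b σ e hσ he h1 h2)
  · exact abs_of_normSq hb (normSq_V2_sub a b σ e hσ he h1 h2)
  · have h3' : |d - c| ≤ e := by rw [abs_sub_comm]; exact h3
    have h4' : e ≤ d + c := by linarith
    have := normSq_V2_sub d c τ e hτ he h3' h4'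
    apply abs_of_normSq hc
    rw [← Complex.normSq_neg]; convert this using 2; ring
  · have h3' : |d - c| ≤ e := by rw [abs_sub_comm]; exact h3
    have h4' : e ≤ d + c := by linarith
    have := normSq_V2 d c τ e hτ he h3' h4'
    apply abs_of_normSq hd
    rw [← Complex.normSq_neg]; convert this using 2; ring

lemma coords (a b e : ℝ) (he : 0 < e) (w : ℂ)
    (hw : ‖w‖ = a) (hw2 : ‖(e:ℂ) - w‖ = b) :
    ∃ σ : ℝ, (σ = 1 ∨ σ = -1) ∧ w = V2 a b σ e := by
  have h1 : w.re^2 + w.im^2 = a^2 := by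
    have := Complex.sq_norm w
    rw [hw] at this
    rw [this, Complex.normSq_apply]; ring
  have h2 : (e - w.re)^2 + w.im^2 = b^2 := by
    have := Complex.sq_norm ((e:ℂ) - w)
    rw [hw2] at this
    rw [this, Complex.normSq_apply]
    simp [Complex.sub_re, Complex.sub_im]
    ring
  have hre : w.re = X2 a b e := by
    rw [X2]
    field_simp
    nlinarith [h1, h2]
  have him2 : w.im^2 = a^2 - (X2 a b e)^2 := by rw [← hre]; nlinarith [h1]
  have hY : Y2 a b e = |w.im| := by
    rw [Y2, ← him2, Real.sqrt_sq_eq_abs]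
  refine ⟨if 0 ≤ w.im then 1 else -1, by split <;> simp, ?_⟩
  apply Complex.ext
  · rw [V2_re, hre]
  · rw [V2_im, hY]
    split <;> rename_i h
    · rw [abs_of_nonneg h]; ring
    · rw [abs_of_neg (lt_of_not_ge h)]; ring

lemma unif_affine (α β v₁ v₂ v₃ v₄ : ℂ) (hα : α ≠ 0) :
    uniformizer (α*v₁+β) (α*v₂+β) (α*v₃+β) (α*v₄+β) = uniformizer v₁ v₂ v₃ v₄ := by
  unfold uniformizer
  have h : ∀ x y : ℂ, (α*x+β) - (α*y+β) = α*(x-y) := by intros; ring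
  rw [h, h, h, h, mul_div_mul_left _ _ hα, mul_div_mul_left _ _ hα]

lemma bridge_alg (x2 y2 x4 y4 e : ℝ)
    (H : y4*(x2^2+y2^2 - e*x2) + y2*(x4^2+y4^2 - e*x4) = 0) :
    ((x2:ℂ)+y2*Complex.I) * (((x4:ℂ)-y4*Complex.I) - e) *
      ((((x2:ℂ)-y2*Complex.I) - e) * ((x4:ℂ)+y4*Complex.I))
    = ((x2:ℂ)-y2*Complex.I) * (((x4:ℂ)+y4*Complex.I) - e) *
      ((((x2:ℂ)+y2*Complex.I) - e) * ((x4:ℂ)-y4*Complex.I)) := by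
  rw [Complex.ext_iff]
  constructor
  · simp only [Complex.mul_re, Complex.mul_im, Complex.sub_re, Complex.sub_im,
      Complex.add_re, Complex.add_im, Complex.I_re, Complex.I_im,
      Complex.ofReal_re, Complex.ofReal_im]
    ring
  · simp only [Complex.mul_re, Complex.mul_im, Complex.sub_re, Complex.sub_im,
      Complex.add_re, Complex.add_im, Complex.I_re, Complex.I_im,
      Complex.ofReal_re, Complex.ofReal_im]
    linear_combination (-2*e) * H

lemma V2_one (a b e : ℝ) : V2 a b 1 e = (X2 a b e : ℂ) + (Y2 a b e : ℂ) * Complex.I := by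
  simp [V2]

lemma V2_negone (a b e : ℝ) : V2 a b (-1) e = (X2 a b e : ℂ) - (Y2 a b e : ℂ) * Complex.I := by
  simp [V2]; ring

lemma V2_sub_ne (a b σ e : ℝ) (hb : 0 < b) (hσ : σ = 1 ∨ σ = -1) (he : 0 < e)
    (h1 : |a-b| ≤ e) (h2 : e ≤ a+b) : V2 a b σ e - (e:ℂ) ≠ 0 := by
  intro h
  have h0 : (e:ℂ) - V2 a b σ e = 0 := by
    have := neg_eq_zero.mpr h
    rwa [neg_sub] at this
  have := normSq_V2_sub a b σ e hσ he h1 h2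
  rw [h0] at this
  simp at this
  nlinarith

lemma V2_ne (a b σ e : ℝ) (ha : 0 < a) (hσ : σ = 1 ∨ σ = -1) (he : 0 < e)
    (h1 : |a-b| ≤ e) (h2 : e ≤ a+b) : V2 a b σ e ≠ 0 := by
  intro h
  have := normSq_V2 a b σ e hσ he h1 h2
  rw [h] at this
  simp at this
  nlinarith

lemma FF_bridge (a b c d e : ℝ) (ha : 0 < a) (hb : 0 < b) (hc : 0 < c) (hd : 0 < d)
    (he : 0 < e) (h1 : |a-b| ≤ e) (h2 : e ≤ a+b) (h3 : |c-d| ≤ e) (h4 : e ≤ c+d)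
    (hg : Y2 d c e * (a^2+b^2-e^2) + Y2 a b e * (c^2+d^2-e^2) = 0) :
    FF a b c d 1 (-1) e = FF a b c d (-1) 1 e := by
  have h3' : |d-c| ≤ e := by rw [abs_sub_comm]; exact h3
  have h4' : e ≤ d+c := by linarith
  have hP1 : V2 a b 1 e - (e:ℂ) ≠ 0 := V2_sub_ne a b 1 e hb (Or.inl rfl) he h1 h2
  have hP2 : V2 a b (-1) e - (e:ℂ) ≠ 0 := V2_sub_ne a b (-1) e hb (Or.inr rfl) he h1 h2
  have hQ1 : V2 d c 1 e ≠ 0 := V2_ne d c 1 e hd (Or.inl rfl) he h3' h4'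
  have hQ2 : V2 d c (-1) e ≠ 0 := V2_ne d c (-1) e hd (Or.inr rfl) he h3' h4'
  unfold FF uniformizer
  simp only [sub_zero]
  rw [div_mul_div_comm, div_mul_div_comm,
    div_eq_div_iff (mul_ne_zero hP1 hQ2) (mul_ne_zero hP2 hQ1)]
  have hy2 : (Y2 a b e)^2 = a^2 - (X2 a b e)^2 := Y2_sq a b e he h1 h2
  have hy4 : (Y2 d c e)^2 = d^2 - (X2 d c e)^2 := Y2_sq d c e he h3' h4'
  have hx2 : 2*e*(X2 a b e) = a^2 + e^2 - b^2 := X2_rel a b e he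
  have hx4 : 2*e*(X2 d c e) = d^2 + e^2 - c^2 := X2_rel d c e he
  have H : Y2 d c e*((X2 a b e)^2+(Y2 a b e)^2 - e*(X2 a b e))
      + Y2 a b e*((X2 d c e)^2+(Y2 d c e)^2 - e*(X2 d c e)) = 0 := by
    linear_combination (1/2)*hg + (Y2 d c e)*hy2 - (Y2 d c e/2)*hx2
      + (Y2 a b e)*hy4 - (Y2 a b e/2)*hx4
  rw [V2_one, V2_negone, V2_one, V2_negone]
  have := bridge_alg (X2 a b e) (Y2 a b e) (X2 d c e) (Y2 d c e) e H
  linear_combination this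

lemma FF_cont (a b c d σ τ : ℝ) (hb : 0 < b) (hd : 0 < d)
    (hσ : σ = 1 ∨ σ = -1) (hτ : τ = 1 ∨ τ = -1) (s : Set ℝ)
    (hbound : ∀ e ∈ s, 0 < e ∧ |a-b| ≤ e ∧ e ≤ a+b ∧ |c-d| ≤ e ∧ e ≤ c+d) :
    ContinuousOn (FF a b c d σ τ) s := by
  have hX2 : ∀ a' b' : ℝ, ContinuousOn (fun e => X2 a' b' e) s := by
    intro a' b'
    unfold X2
    apply ContinuousOn.div (by fun_prop) (by fun_prop)
    intro x hx
    have := (hbound x hx).1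
    positivity
  have hY2 : ∀ a' b' : ℝ, ContinuousOn (fun e => Y2 a' b' e) s := by
    intro a' b'
    unfold Y2
    exact Real.continuous_sqrt.comp_continuousOn
      (continuousOn_const.sub ((hX2 a' b').pow 2))
  have hV2 : ∀ a' b' σ' : ℝ, ContinuousOn (fun e => V2 a' b' σ' e) s := by
    intro a' b' σ'
    unfold V2
    exact ((Complex.continuous_ofReal.comp_continuousOn (hX2 a' b')).add
      ((continuousOn_const.mul
        (Complex.continuous_ofReal.comp_continuousOn (hY2 a' b'))).mul
        continuousOn_const))
  have key : ∀ e ∈ s, |d-c| ≤ e ∧ e ≤ d+c := by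
    intro e he
    obtain ⟨_, _, _, h3, h4⟩ := hbound e he
    exact ⟨by rw [abs_sub_comm]; exact h3, by linarith⟩
  unfold FF uniformizer
  simp only [sub_zero]
  apply ContinuousOn.mul
  · apply ContinuousOn.div (hV2 a b σ)
      ((hV2 a b σ).sub (Complex.continuous_ofReal.continuousOn))
    intro e he
    obtain ⟨he0, h1, h2, _, _⟩ := hbound e he
    exact V2_sub_ne a b σ e hb hσ he0 h1 h2
  · apply ContinuousOn.div
      ((hV2 d c τ).sub (Complex.continuous_ofReal.continuousOn))
      (hV2 d c τ)
    intro e he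
    obtain ⟨h3, h4⟩ := key e he
    exact V2_ne d c τ e hd hτ (hbound e he).1 h3 h4

lemma reduce (a b c d : ℝ) (v₁ v₂ v₃ v₄ : ℂ) (h : IsConfig a b c d v₁ v₂ v₃ v₄)
    (hv : v₃ ≠ v₁) :
    ∃ σ τ e : ℝ, (σ = 1 ∨ σ = -1) ∧ (τ = 1 ∨ τ = -1) ∧ 0 < e ∧
      |a-b| ≤ e ∧ e ≤ a+b ∧ |c-d| ≤ e ∧ e ≤ c+d ∧
      uniformizer v₁ v₂ v₃ v₄ = FF a b c d σ τ e := by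
  obtain ⟨H1, H2, H3, H4⟩ := h
  set e := ‖v₃ - v₁‖ with he_def
  have he : 0 < e := norm_pos_iff.mpr (sub_ne_zero.mpr hv)
  have t1 : e ≤ a + b := by
    have := norm_sub_le_norm_sub_add_norm_sub v₃ v₂ v₁
    have h32 : ‖v₃ - v₂‖ = b := H2
    have h21 : ‖v₂ - v₁‖ = a := H1
    rw [h32, h21] at this
    linarith [this]
  have t2 : |a - b| ≤ e := by
    rw [abs_sub_le_iff]
    constructor
    · have := norm_sub_le_norm_sub_add_norm_sub v₂ v₃ v₁
      have h23 : ‖v₂ - v₃‖ = b := by rw [norm_sub_rev]; exact H2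
      rw [h23, H1, ← he_def] at this
      linarith
    · have := norm_sub_le_norm_sub_add_norm_sub v₃ v₁ v₂
      have h12 : ‖v₁ - v₂‖ = a := by rw [norm_sub_rev]; exact H1
      rw [h12, ← he_def] at this
      rw [H2] at this
      linarith
  have t3 : e ≤ c + d := by
    have := norm_sub_le_norm_sub_add_norm_sub v₃ v₄ v₁
    have h34 : ‖v₃ - v₄‖ = c := by rw [norm_sub_rev]; exact H3
    have h41 : ‖v₄ - v₁‖ = d := by rw [norm_sub_rev]; exact H4
    rw [h34, h41, ← he_def] at this
    linarith
  have t4 : |c - d| ≤ e := by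
    rw [abs_sub_le_iff]
    constructor
    · have := norm_sub_le_norm_sub_add_norm_sub v₄ v₁ v₃
      have h41 : ‖v₄ - v₁‖ = d := by rw [norm_sub_rev]; exact H4
      have h13 : ‖v₁ - v₃‖ = e := by rw [norm_sub_rev, ← he_def]
      rw [h41, h13, H3] at this
      linarith
    · have := norm_sub_le_norm_sub_add_norm_sub v₄ v₃ v₁
      have h41 : ‖v₄ - v₁‖ = d := by rw [norm_sub_rev]; exact H4
      rw [h41, H3, ← he_def] at this
      linarith
  set α : ℂ := (e:ℂ) / (v₃ - v₁) with hα_def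
  have hαne : α ≠ 0 := by
    apply div_ne_zero _ (sub_ne_zero.mpr hv)
    exact_mod_cast he.ne'
  have hα3 : α * (v₃ - v₁) = (e:ℂ) := div_mul_cancel₀ _ (sub_ne_zero.mpr hv)
  have habsα : ‖α‖ = 1 := by
    rw [hα_def, norm_div, Complex.norm_real, Real.norm_eq_abs, abs_of_pos he, ← he_def]
    exact div_self he.ne'
  set w₂ : ℂ := α * (v₂ - v₁) with hw₂_def
  set w₄ : ℂ := α * (v₄ - v₁) with hw₄_def
  have hw₂a : ‖w₂‖ = a := by rw [hw₂_def, norm_mul, habsα, one_mul, H1]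
  have hw₂b : ‖(e:ℂ) - w₂‖ = b := by
    have : (e:ℂ) - w₂ = α * (v₃ - v₂) := by rw [← hα3, hw₂_def]; ring
    rw [this, norm_mul, habsα, one_mul, H2]
  have hw₄d : ‖w₄‖ = d := by
    rw [hw₄_def, norm_mul, habsα, one_mul, norm_sub_rev, H4]
  have hw₄c : ‖(e:ℂ) - w₄‖ = c := by
    have : (e:ℂ) - w₄ = α * (v₃ - v₄) := by rw [← hα3, hw₄_def]; ring
    rw [this, norm_mul, habsα, one_mul, norm_sub_rev, H3]
  obtain ⟨σ, hσ, hσeq⟩ := coords a b e he w₂ hw₂a hw₂b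
  obtain ⟨τ, hτ, hτeq⟩ := coords d c e he w₄ hw₄d hw₄c
  refine ⟨σ, τ, e, hσ, hτ, he, t2, t1, t4, t3, ?_⟩
  have haff := unif_affine α (-(α*v₁)) v₁ v₂ v₃ v₄ hαne
  have h0 : α*v₁ + -(α*v₁) = 0 := by ring
  have hw2 : α*v₂ + -(α*v₁) = w₂ := by rw [hw₂_def]; ring
  have h3 : α*v₃ + -(α*v₁) = (e:ℂ) := by rw [← hα3]; ring
  have hw4 : α*v₄ + -(α*v₁) = w₄ := by rw [hw₄_def]; ring
  rw [h0, hw2, h3, hw4] at haff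
  rw [← haff, FF, ← hσeq, ← hτeq]

lemma V2_sigma_irrel (a b e σ σ' : ℝ) (h : Y2 a b e = 0) : V2 a b σ e = V2 a b σ' e := by
  simp [V2, h]

lemma FF_glue_sigma (a b c d e σ σ' τ : ℝ) (h : Y2 a b e = 0) :
    FF a b c d σ τ e = FF a b c d σ' τ e := by
  rw [FF, FF, V2_sigma_irrel a b e σ σ' h]

lemma FF_glue_tau (a b c d e σ τ τ' : ℝ) (h : Y2 d c e = 0) :
    FF a b c d σ τ e = FF a b c d σ τ' e := by
  rw [FF, FF, V2_sigma_irrel d c e τ τ' h]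

lemma Y2_contOn (a b : ℝ) (s : Set ℝ) (hs : ∀ e ∈ s, 0 < e) :
    ContinuousOn (fun e => Y2 a b e) s := by
  unfold Y2
  apply Real.continuous_sqrt.comp_continuousOn
  apply continuousOn_const.sub
  apply ContinuousOn.pow
  unfold X2
  apply ContinuousOn.div (by fun_prop) (by fun_prop)
  intro x hx
  have := hs x hx
  positivity


theorem stmt_3 (a b c d : ℝ) (ha : 0 < a) (hb : 0 < b) (hc : 0 < c) (hd : 0 < d)
    (hnd : NonDeg a b c d)
    (hne : ∃ v₁ v₂ v₃ v₄ : ℂ, IsConfig a b c d v₁ v₂ v₃ v₄) :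
    IsConnected {w : ℂ | ∃ v₁ v₂ v₃ v₄ : ℂ,
      IsConfig a b c d v₁ v₂ v₃ v₄ ∧ uniformizer v₁ v₂ v₃ v₄ = w} := by
  classical
  have N : ∀ s t u : ℝ, (s = 1 ∨ s = -1) → (t = 1 ∨ t = -1) → (u = 1 ∨ u = -1) →
      a + s*b + t*c + u*d ≠ 0 := by
    intro s t u hs ht hu hh
    exact hnd 1 s t u (Or.inl rfl) hs ht hu (by linarith)
  have n1 : a - b + c - d ≠ 0 := fun hh =>
    N (-1) 1 (-1) (Or.inr rfl) (Or.inl rfl) (Or.inr rfl) (by linarith)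
  have n2 : a - b - c + d ≠ 0 := fun hh =>
    N (-1) (-1) 1 (Or.inr rfl) (Or.inr rfl) (Or.inl rfl) (by linarith)
  have n3 : a - b - c - d ≠ 0 := fun hh =>
    N (-1) (-1) (-1) (Or.inr rfl) (Or.inr rfl) (Or.inr rfl) (by linarith)
  have n4 : a - b + c + d ≠ 0 := fun hh =>
    N (-1) 1 1 (Or.inr rfl) (Or.inl rfl) (Or.inl rfl) (by linarith)
  have n5 : a + b - c - d ≠ 0 := fun hh =>
    N 1 (-1) (-1) (Or.inl rfl) (Or.inr rfl) (Or.inr rfl) (by linarith)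
  have n6 : a + b - c + d ≠ 0 := fun hh =>
    N 1 (-1) 1 (Or.inl rfl) (Or.inr rfl) (Or.inl rfl) (by linarith)
  have n7 : a + b + c - d ≠ 0 := fun hh =>
    N 1 1 (-1) (Or.inl rfl) (Or.inl rfl) (Or.inr rfl) (by linarith)
  set em : ℝ := max |a-b| |c-d| with hem_def
  set ep : ℝ := min (a+b) (c+d) with hep_def
  set E : Set ℝ := Set.Icc em ep with hE_def
  have hvne : ∀ v₁ v₂ v₃ v₄ : ℂ, IsConfig a b c d v₁ v₂ v₃ v₄ → v₃ ≠ v₁ := by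
    rintro v₁ v₂ v₃ v₄ ⟨H1, H2, H3, H4⟩ h
    rw [h] at H2 H3
    have hab : a = b := by rw [← H1, ← H2, norm_sub_rev]
    have hcd : c = d := by rw [← H3, ← H4, norm_sub_rev]
    exact n1 (by rw [hab, hcd]; ring)
  have hle : em ≤ ep := by
    obtain ⟨v₁, v₂, v₃, v₄, hcfg⟩ := hne
    obtain ⟨σ, τ, e, _, _, _, t2, t1, t4, t3, _⟩ :=
      reduce a b c d v₁ v₂ v₃ v₄ hcfg (hvne v₁ v₂ v₃ v₄ hcfg)
    exact le_trans (max_le t2 t4) (le_min t1 t3)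
  have hem_pos : 0 < em := by
    rcases eq_or_ne a b with hab | hab
    · have hcd : c ≠ d := fun h => n1 (by rw [hab, h]; ring)
      calc (0:ℝ) < |c-d| := abs_pos.mpr (sub_ne_zero.mpr hcd)
        _ ≤ em := le_max_right _ _
    · calc (0:ℝ) < |a-b| := abs_pos.mpr (sub_ne_zero.mpr hab)
        _ ≤ em := le_max_left _ _
  have hbound : ∀ e ∈ E, 0 < e ∧ |a-b| ≤ e ∧ e ≤ a+b ∧ |c-d| ≤ e ∧ e ≤ c+d := by
    intro e he
    obtain ⟨h1, h2⟩ := he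
    refine ⟨lt_of_lt_of_le hem_pos h1, le_trans (le_max_left _ _) h1,
      le_trans h2 (min_le_left _ _), le_trans (le_max_right _ _) h1,
      le_trans h2 (min_le_right _ _)⟩
  have hemE : em ∈ E := Set.left_mem_Icc.mpr hle
  set A : Set ℂ := FF a b c d 1 1 '' E with hA_def
  set B : Set ℂ := FF a b c d 1 (-1) '' E with hB_def
  set C : Set ℂ := FF a b c d (-1) 1 '' E with hC_def
  set D : Set ℂ := FF a b c d (-1) (-1) '' E with hD_def
  have hS : {w : ℂ | ∃ v₁ v₂ v₃ v₄ : ℂ,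
      IsConfig a b c d v₁ v₂ v₃ v₄ ∧ uniformizer v₁ v₂ v₃ v₄ = w}
      = ((B ∪ C) ∪ A) ∪ D := by
    ext w
    constructor
    · rintro ⟨v₁, v₂, v₃, v₄, hcfg, rfl⟩
      obtain ⟨σ, τ, e, hσ, hτ, he0, t2, t1, t4, t3, hu⟩ :=
        reduce a b c d v₁ v₂ v₃ v₄ hcfg (hvne v₁ v₂ v₃ v₄ hcfg)
      have heE : e ∈ E := ⟨max_le t2 t4, le_min t1 t3⟩
      rcases hσ with rfl | rfl <;> rcases hτ with rfl | rfl
      · exact Or.inl (Or.inr ⟨e, heE, hu.symm⟩)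
      · exact Or.inl (Or.inl (Or.inl ⟨e, heE, hu.symm⟩))
      · exact Or.inl (Or.inl (Or.inr ⟨e, heE, hu.symm⟩))
      · exact Or.inr ⟨e, heE, hu.symm⟩
    · intro hw
      have main : ∀ σ τ : ℝ, (σ = 1 ∨ σ = -1) → (τ = 1 ∨ τ = -1) →
          ∀ e ∈ E, FF a b c d σ τ e ∈ {w : ℂ | ∃ v₁ v₂ v₃ v₄ : ℂ,
            IsConfig a b c d v₁ v₂ v₃ v₄ ∧ uniformizer v₁ v₂ v₃ v₄ = w} := by
        intro σ τ hσ hτ e heE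
        obtain ⟨he0, h1, h2, h3, h4⟩ := hbound e heE
        exact ⟨0, V2 a b σ e, (e:ℂ), V2 d c τ e,
          config_of a b c d σ τ e ha.le hb.le hc.le hd.le hσ hτ he0 h1 h2 h3 h4, rfl⟩
      rcases hw with ((⟨e, heE, rfl⟩ | ⟨e, heE, rfl⟩) | ⟨e, heE, rfl⟩) | ⟨e, heE, rfl⟩
      · exact main 1 (-1) (Or.inl rfl) (Or.inr rfl) e heE
      · exact main (-1) 1 (Or.inr rfl) (Or.inl rfl) e heE
      · exact main 1 1 (Or.inl rfl) (Or.inl rfl) e heE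
      · exact main (-1) (-1) (Or.inr rfl) (Or.inr rfl) e heE
  rw [hS]
  have hEconn : IsConnected E := ⟨⟨em, hemE⟩, isPreconnected_Icc⟩
  have hAconn : IsConnected A := hEconn.image _
    (FF_cont a b c d 1 1 hb hd (Or.inl rfl) (Or.inl rfl) E hbound)
  have hBconn : IsConnected B := hEconn.image _
    (FF_cont a b c d 1 (-1) hb hd (Or.inl rfl) (Or.inr rfl) E hbound)
  have hCconn : IsConnected C := hEconn.image _
    (FF_cont a b c d (-1) 1 hb hd (Or.inr rfl) (Or.inl rfl) E hbound)
  have hDconn : IsConnected D := hEconn.image _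
    (FF_cont a b c d (-1) (-1) hb hd (Or.inr rfl) (Or.inr rfl) E hbound)
  set g : ℝ → ℝ := fun e => Y2 d c e * (a^2+b^2-e^2) + Y2 a b e * (c^2+d^2-e^2) with hg_def
  have hgcont : ContinuousOn g E := by
    apply ContinuousOn.add
    · exact (Y2_contOn d c E (fun e he => (hbound e he).1)).mul (by fun_prop)
    · exact (Y2_contOn a b E (fun e he => (hbound e he).1)).mul (by fun_prop)
  have habne : |a-b| ≠ |c-d| := by
    intro h
    rcases abs_eq_abs.mp h with h' | h'
    · exact n2 (by linarith)
    · exact n1 (by linarith)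
  have hab_cd : |a-b| ≠ c+d := by
    intro h
    rcases abs_eq (by linarith : (0:ℝ) ≤ c+d) |>.mp h with h' | h'
    · exact n3 (by linarith)
    · exact n4 (by linarith)
  have hcd_ab : |c-d| ≠ a+b := by
    intro h
    rcases abs_eq (by linarith : (0:ℝ) ≤ a+b) |>.mp h with h' | h'
    · exact n6 (by linarith)
    · exact n7 (by linarith)
  have habcd : a+b ≠ c+d := fun h => n5 (by linarith)
  have hgem : 0 < g em := by
    rcases max_choice |a-b| |c-d| with h | h
    · have h' : em = |a-b| := hem_def.trans h
      have hz : Y2 a b em = 0 := Y2_zero_low a b em hem_pos h'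
      have hdc1 : |d-c| < em := by
        rw [abs_sub_comm]
        exact lt_of_le_of_ne (le_max_right _ _) (fun hh => habne (h'.symm.trans hh.symm))
      have hdc2 : em < d+c := by
        have h1 : em ≤ c+d := le_trans hle (min_le_right _ _)
        have h2 : em ≠ c+d := by rw [h']; exact hab_cd
        have := lt_of_le_of_ne h1 h2
        linarith
      have hpos : 0 < Y2 d c em := Y2_pos d c em hem_pos hdc1 hdc2
      have hsq : em^2 = (a-b)^2 := by rw [h', sq_abs]
      have hval : a^2+b^2-em^2 = 2*a*b := by rw [hsq]; ring
      rw [hg_def]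
      simp only [hz, zero_mul, add_zero, mul_zero]
      rw [hval]
      positivity
    · have h' : em = |c-d| := hem_def.trans h
      have hz : Y2 d c em = 0 := Y2_zero_low d c em hem_pos (by rw [h', abs_sub_comm])
      have hab1 : |a-b| < em := by
        exact lt_of_le_of_ne (le_max_left _ _) (fun hh => habne (hh.trans h'))
      have hab2 : em < a+b := by
        have h1 : em ≤ a+b := le_trans hle (min_le_left _ _)
        have h2 : em ≠ a+b := by rw [h']; exact hcd_ab
        exact lt_of_le_of_ne h1 h2
      have hpos : 0 < Y2 a b em := Y2_pos a b em hem_pos hab1 hab2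
      have hsq : em^2 = (c-d)^2 := by rw [h', sq_abs]
      have hval : c^2+d^2-em^2 = 2*c*d := by rw [hsq]; ring
      rw [hg_def]
      simp only [hz, zero_mul, zero_add, mul_zero]
      rw [hval]
      positivity
  have hep_pos : 0 < ep := lt_of_lt_of_le hem_pos hle
  have hgep : g ep < 0 := by
    rcases min_choice (a+b) (c+d) with h | h
    · have h' : ep = a+b := hep_def.trans h
      have habcd' : a+b ≤ c+d := min_eq_left_iff.mp h
      have hz : Y2 a b ep = 0 := Y2_zero_high a b ep hep_pos h'
      have hdc1 : |d-c| < ep := by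
        rw [abs_sub_comm]
        have h1 : |c-d| ≤ ep := le_trans (le_max_right _ _) hle
        refine lt_of_le_of_ne h1 (fun hh => hcd_ab ?_)
        rw [hh, h']
      have hdc2 : ep < d+c := by
        have := lt_of_le_of_ne habcd' habcd
        rw [h']; linarith
      have hpos : 0 < Y2 d c ep := Y2_pos d c ep hep_pos hdc1 hdc2
      have hsq : ep^2 = (a+b)^2 := by rw [h']
      have hval : a^2+b^2-ep^2 = -(2*a*b) := by rw [hsq]; ring
      rw [hg_def]
      simp only [hz, zero_mul, add_zero, mul_zero]
      rw [hval]
      nlinarith [mul_pos hpos (by positivity : (0:ℝ) < 2*a*b)]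
    · have h' : ep = c+d := hep_def.trans h
      have habcd' : c+d ≤ a+b := min_eq_right_iff.mp h
      have hz : Y2 d c ep = 0 := Y2_zero_high d c ep hep_pos (by rw [h']; ring)
      have hab1 : |a-b| < ep := by
        have h1 : |a-b| ≤ ep := le_trans (le_max_left _ _) hle
        refine lt_of_le_of_ne h1 (fun hh => hab_cd ?_)
        rw [hh, h']
      have hab2 : ep < a+b := by
        rw [h']; exact lt_of_le_of_ne habcd' (fun hh => habcd hh.symm)
      have hpos : 0 < Y2 a b ep := Y2_pos a b ep hep_pos hab1 hab2
      have hsq : ep^2 = (c+d)^2 := by rw [h']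
      have hval : c^2+d^2-ep^2 = -(2*c*d) := by rw [hsq]; ring
      rw [hg_def]
      simp only [hz, zero_mul, zero_add, mul_zero]
      rw [hval]
      nlinarith [mul_pos hpos (by positivity : (0:ℝ) < 2*c*d)]
  have hIVT : ∃ e ∈ E, g e = 0 := by
    have h0 : (0:ℝ) ∈ Set.Icc (g ep) (g em) := ⟨hgep.le, hgem.le⟩
    obtain ⟨e, heE, hge⟩ := intermediate_value_Icc' hle hgcont h0
    exact ⟨e, heE, hge⟩
  obtain ⟨estar, hestarE, hgstar⟩ := hIVT
  have hbridge : FF a b c d 1 (-1) estar = FF a b c d (-1) 1 estar := by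
    obtain ⟨he0, h1, h2, h3, h4⟩ := hbound estar hestarE
    exact FF_bridge a b c d estar ha hb hc hd he0 h1 h2 h3 h4 hgstar
  have hBC : IsConnected (B ∪ C) := by
    apply IsConnected.union _ hBconn hCconn
    exact ⟨FF a b c d 1 (-1) estar, ⟨estar, hestarE, rfl⟩,
      by rw [hbridge]; exact ⟨estar, hestarE, rfl⟩⟩
  have hglue : (Y2 a b em = 0) ∨ (Y2 d c em = 0) := by
    rcases max_choice |a-b| |c-d| with h | h
    · exact Or.inl (Y2_zero_low a b em hem_pos (hem_def.trans h))
    · exact Or.inr (Y2_zero_low d c em hem_pos (by rw [hem_def.trans h, abs_sub_comm]))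
  rcases hglue with hz | hz
  · have g1 : FF a b c d 1 1 em = FF a b c d (-1) 1 em := FF_glue_sigma a b c d em 1 (-1) 1 hz
    have g2 : FF a b c d 1 (-1) em = FF a b c d (-1) (-1) em :=
      FF_glue_sigma a b c d em 1 (-1) (-1) hz
    have hBCA : IsConnected ((B ∪ C) ∪ A) := by
      apply IsConnected.union _ hBC hAconn
      exact ⟨FF a b c d (-1) 1 em, Or.inr ⟨em, hemE, rfl⟩,
        by rw [← g1]; exact ⟨em, hemE, rfl⟩⟩
    apply IsConnected.union _ hBCA hDconn
    exact ⟨FF a b c d 1 (-1) em, Or.inl (Or.inl ⟨em, hemE, rfl⟩),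
      by rw [g2]; exact ⟨em, hemE, rfl⟩⟩
  · have g1 : FF a b c d 1 1 em = FF a b c d 1 (-1) em := FF_glue_tau a b c d em 1 1 (-1) hz
    have g2 : FF a b c d (-1) 1 em = FF a b c d (-1) (-1) em :=
      FF_glue_tau a b c d em (-1) 1 (-1) hz
    have hBCA : IsConnected ((B ∪ C) ∪ A) := by
      apply IsConnected.union _ hBC hAconn
      exact ⟨FF a b c d 1 (-1) em, Or.inl ⟨em, hemE, rfl⟩,
        by rw [← g1]; exact ⟨em, hemE, rfl⟩⟩
    apply IsConnected.union _ hBCA hDconn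
    exact ⟨FF a b c d (-1) 1 em, Or.inl (Or.inr ⟨em, hemE, rfl⟩),
      by rw [g2]; exact ⟨em, hemE, rfl⟩⟩
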